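/- Let k be an algebraically closed field of characteristic zero, A a finitely generated commutative k-algebra, G a finite group acting on A by k-algebra automorphisms, and M a finitely generated G-equivariant A-module. Let m be a maximal ideal of A and let s ∈ M/mM be an element fixed by every element of the stabilizer G_m. Then there exists a G-invariant element t ∈ M^G whose image under the quotient map M → M/mM is s. -/
import Mathlib


/-!
STATEMENT 9: Over an algebraically closed field `k` of characteristic zero,
for a finite group `G` acting on a finitely generated commutative `k`-algebra
`A` and a finitely generated `G`-equivariant `A`-module `M`, any element of
the fiber `M/mM` (`m` a maximal ideal of `A`) fixed by the stabilizer `G_m`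
lifts to a `G`-invariant element of `M`.
-/

theorem invariant_fiber_element_lifts_to_invariant_section
    (k : Type*) [Field k] [CharZero k] [IsAlgClosed k]
    (A : Type*) [CommRing A] [Algebra k A] [Algebra.FiniteType k A]
    (G : Type*) [Group G] [Finite G] [MulSemiringAction G A] [SMulCommClass G k A]
    (M : Type*) [AddCommGroup M] [Module A M] [Module.Finite A M]
    [DistribMulAction G M]
    (hGM : ∀ (g : G) (a : A) (x : M), g • (a • x) = (g • a) • (g • x))
    (m : Ideal A) (hm : m.IsMaximal)
    (s : M ⧸ (m • ⊤ : Submodule A M))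
    -- `s` is fixed by every element of the stabilizer `G_m`
    (hs : ∀ (g : G), (∀ a : A, g • a ∈ m ↔ a ∈ m) →
      ∀ x : M, Submodule.Quotient.mk x = s → g • x - x ∈ m • (⊤ : Submodule A M)) :
    ∃ t : M, (∀ g : G, g • t = t) ∧ Submodule.Quotient.mk t = s := by
  classical
  haveI : Fintype G := Fintype.ofFinite G
  -- the "translated" ideals
  set σ : G → Ideal A := fun g => m.comap (MulSemiringAction.toRingHom G A g) with hσ
  have hσ_mem : ∀ (g : G) (a : A), a ∈ σ g ↔ g • a ∈ m := fun g a => Iff.rfl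
  have hσ_surj : ∀ g : G, Function.Surjective (MulSemiringAction.toRingHom G A g) :=
    fun g a => ⟨g⁻¹ • a, smul_inv_smul g a⟩
  have hσ_max : ∀ g : G, (σ g).IsMaximal := fun g =>
    Ideal.comap_isMaximal_of_surjective _ (hσ_surj g)
  set S : Finset G := Finset.univ.filter (fun g => σ g ≠ m) with hS
  set T : Finset G := Finset.univ.filter (fun g => σ g = m) with hT
  -- choice of elements separating m from σ g, g ∈ S
  have hchoice : ∀ g : G, ∃ a : A, g ∈ S → a ∈ σ g ∧ a ∉ m := by
    intro g
    by_cases hg : g ∈ S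
    · have hne : σ g ≠ m := (Finset.mem_filter.mp hg).2
      have hnle : ¬ σ g ≤ m := fun hle => hne ((hσ_max g).eq_of_le hm.ne_top hle)
      obtain ⟨a, ha1, ha2⟩ := SetLike.not_le_iff_exists.mp hnle
      exact ⟨a, fun _ => ⟨ha1, ha2⟩⟩
    · exact ⟨1, fun h => absurd h hg⟩
  choose c hc using hchoice
  set b₀ : A := ∏ g ∈ S, c g with hb₀
  have hb₀_notMem : b₀ ∉ m := by
    rw [hb₀, Ideal.IsPrime.prod_mem_iff]
    rintro ⟨g, hg, hgm⟩
    exact (hc g hg).2 hgm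
  have hb₀_mem : ∀ g ∈ S, b₀ ∈ σ g := by
    intro g hg
    rw [hb₀, ← Finset.prod_erase_mul S c hg]
    exact Ideal.mul_mem_left _ _ (hc g hg).1
  obtain ⟨u, i, him, hui⟩ := hm.exists_inv hb₀_notMem
  set b : A := u * b₀ with hb
  have hb_sub : b - 1 ∈ m := by
    have : b - 1 = -i := by rw [hb, ← hui]; ring
    rw [this]; exact neg_mem him
  have hb_mem : ∀ g ∈ S, b ∈ σ g := fun g hg => Ideal.mul_mem_left _ _ (hb₀_mem g hg)
  -- the lift
  obtain ⟨x₀, hx₀⟩ := Submodule.Quotient.mk_surjective _ s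
  set x : M := b • x₀ with hx
  have hxx₀ : x - x₀ ∈ (m • ⊤ : Submodule A M) := by
    have : x - x₀ = (b - 1) • x₀ := by rw [hx, sub_smul, one_smul]
    rw [this]
    exact Submodule.smul_mem_smul hb_sub Submodule.mem_top
  have hmkx : Submodule.Quotient.mk x = s := by
    rw [← hx₀]
    exact (Submodule.Quotient.eq _).mpr hxx₀
  -- the invariant element before rescaling
  set t' : M := ∑ g : G, g • x with ht'
  have ht'_inv : ∀ g : G, g • t' = t' := by
    intro g
    rw [ht', Finset.smul_sum]
    exact Fintype.sum_equiv (Equiv.mulLeft g) _ _ (fun g' => (mul_smul g g' x).symm)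
  -- scaling constant
  set n : ℕ := T.card with hn
  have hn_pos : 0 < n := by
    rw [hn]
    refine Finset.card_pos.mpr ⟨1, ?_⟩
    simp only [hT, Finset.mem_filter, Finset.mem_univ, true_and]
    ext a
    simp [hσ_mem]
  set c₀ : A := algebraMap k A ((n : k)⁻¹) with hc₀
  have hcn : c₀ * (n : A) = 1 := by
    rw [hc₀]
    have : (n : A) = algebraMap k A (n : k) := by
      simp [map_natCast]
    rw [this, ← map_mul, inv_mul_cancel₀ (Nat.cast_ne_zero.mpr hn_pos.ne'), map_one]
  have hc₀_inv : ∀ g : G, g • c₀ = c₀ := by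
    intro g
    rw [hc₀, Algebra.algebraMap_eq_smul_one, smul_comm, smul_one]
  refine ⟨c₀ • t', fun g => ?_, ?_⟩
  · rw [hGM, hc₀_inv, ht'_inv]
  · rw [← hx₀]
    refine (Submodule.Quotient.eq _).mpr ?_
    have key : t' - (n : A) • x₀ ∈ (m • ⊤ : Submodule A M) := by
      have hsplit : t' = ∑ g ∈ S, g • x + ∑ g ∈ T, g • x := by
        rw [ht', hS, hT, ← Finset.sum_filter_add_sum_filter_not Finset.univ (fun g => σ g ≠ m)]
        congr 1
        apply Finset.sum_congr _ (fun _ _ => rfl)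
        congr 1
        ext g; simp [not_not]
      have hnsmul : (n : A) • x₀ = ∑ _g ∈ T, x₀ := by
        rw [Finset.sum_const, hn, ← Nat.cast_smul_eq_nsmul A]
      rw [hsplit, hnsmul, add_sub_assoc, ← Finset.sum_sub_distrib]
      refine Submodule.add_mem _ (Submodule.sum_mem _ fun g hg => ?_)
        (Submodule.sum_mem _ fun g hg => ?_)
      · rw [hx, hGM]
        exact Submodule.smul_mem_smul ((hσ_mem g b).mp (hb_mem g hg)) Submodule.mem_top
      · have hgT : σ g = m := (Finset.mem_filter.mp hg).2
        have hfix : ∀ a : A, g • a ∈ m ↔ a ∈ m := by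
          intro a
          rw [← hσ_mem, hgT]
        have h1 : g • x - x ∈ (m • ⊤ : Submodule A M) := hs g hfix x hmkx
        have : g • x - x₀ = (g • x - x) + (x - x₀) := by abel
        rw [this]
        exact Submodule.add_mem _ h1 hxx₀
    have : c₀ • t' - x₀ = c₀ • (t' - (n : A) • x₀) := by
      rw [smul_sub, smul_smul, hcn, one_smul]
    rw [this]
    exact Submodule.smul_mem _ _ key
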